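/- Let H = ⊕_{i∈ℤ} P be the restricted direct sum of copies of a group P indexed by ℤ, and let α be the shift automorphism α((h_i)_i) = (h_{i+1})_i. Then for every h̄ ∈ H there exist ḡ ∈ H, an index i ∈ ℤ, and an element h* ∈ H supported only at i, such that h̄ = ḡ·α(ḡ⁻¹)·h*. -/
import Mathlib


/-- The one-step shift on the restricted direct sum `⊕_{i∈ℤ} P`. -/
def shiftFun {P : Type*} [Group P] (f : ℤ → P) : ℤ → P := fun i => f (i + 1)

private lemma listprod_step {P : Type*} [Group P] (f : ℤ → P) (j : ℤ) (n : ℕ) :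
    ((List.range (n+1)).map (fun m : ℕ => f (j + m))).prod =
      f j * ((List.range n).map (fun m : ℕ => f ((j+1) + m))).prod := by
  rw [List.range_succ_eq_map, List.map_cons, List.prod_cons]
  simp only [Nat.cast_zero, add_zero, List.map_map]
  congr 1
  congr 1
  apply List.map_congr_left
  intro m _
  simp only [Function.comp_apply, Nat.cast_succ]
  ring_nf

/-- Every finitely supported `h̄ : ℤ → P` decomposes as a `[1,t]`-commutator
`ḡ · α(ḡ⁻¹)` times an element supported at a single index `i`. -/
theorem stmt_9 {P : Type*} [Group P] (f : ℤ → P)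
    (hf : (Function.mulSupport f).Finite) :
    ∃ g : ℤ → P, (Function.mulSupport g).Finite ∧
      ∃ (i : ℤ) (h : ℤ → P), (∀ j : ℤ, j ≠ i → h j = 1) ∧
        f = g * shiftFun g⁻¹ * h := by
  by_cases hs : hf.toFinset.Nonempty
  · set a : ℤ := hf.toFinset.min' hs with ha
    set b : ℤ := hf.toFinset.max' hs with hb
    have hab : a ≤ b := hf.toFinset.min'_le _ (hf.toFinset.max'_mem hs)
    -- f vanishes outside [a,b]
    have hout : ∀ j : ℤ, j < a ∨ b < j → f j = 1 := by
      intro j hj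
      by_contra hne
      have hmem : j ∈ hf.toFinset := by
        simp [Set.Finite.mem_toFinset, Function.mulSupport, hne]
      rcases hj with hj | hj
      · exact absurd (Finset.min'_le _ _ hmem) (not_le.mpr hj)
      · exact absurd (Finset.le_max' _ _ hmem) (not_le.mpr hj)
    set g : ℤ → P := fun j =>
      if a ≤ j then ((List.range (b + 1 - j).toNat).map (fun m : ℕ => f (j + m))).prod
      else 1 with hg
    have hgone : ∀ j : ℤ, j < a ∨ b < j → g j = 1 := by
      intro j hj
      rcases hj with hj | hj
      · simp [hg, not_le.mpr hj]
      · have : (b + 1 - j).toNat = 0 := by omega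
        simp [hg, this]
    have hstep : ∀ j : ℤ, a ≤ j → j ≤ b → g j = f j * g (j + 1) := by
      intro j hja hjb
      have h1 : (b + 1 - j).toNat = (b + 1 - (j+1)).toNat + 1 := by omega
      have h2 : a ≤ j + 1 := by omega
      simp only [hg, if_pos hja, if_pos h2, h1]
      exact listprod_step f j _
    refine ⟨g, ?_, a - 1, fun j => if j = a - 1 then g a else 1, ?_, ?_⟩
    · apply Set.Finite.subset (Set.finite_Icc a b)
      intro j hj
      simp only [Function.mem_mulSupport] at hj
      by_contra hmem
      simp only [Set.mem_Icc, not_and_or, not_le] at hmem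
      exact hj (hgone j (by omega))
    · intro j hj; simp [hj]
    · funext j
      simp only [Pi.mul_apply, Pi.inv_apply, shiftFun]
      rcases lt_trichotomy j (a - 1) with hj | hj | hj
      · rw [hout j (Or.inl (by omega)), hgone j (Or.inl (by omega)),
          hgone (j+1) (Or.inl (by omega)), if_neg (by omega)]
        simp
      · subst hj
        rw [hout _ (Or.inl (by omega)), hgone _ (Or.inl (by omega)), if_pos rfl]
        simp
      · rw [if_neg (by omega), mul_one]
        rcases le_or_gt j b with hjb | hjb
        · rw [hstep j (by omega) hjb]
          group
        · rw [hout j (Or.inr hjb), hgone j (Or.inr hjb), hgone (j+1) (Or.inr (by omega))]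
          simp
  · have hf1 : ∀ j, f j = 1 := by
      intro j
      by_contra hne
      exact hs ⟨j, by simp [Set.Finite.mem_toFinset, Function.mulSupport, hne]⟩
    refine ⟨1, by simp, 0, 1, fun _ _ => rfl, ?_⟩
    funext j
    simp [hf1 j, shiftFun]
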